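/- arXiv:1712.07150 — 2 statements merged into one kernel-verified Lean document; each statement's English description precedes it below -/
import Mathlib

section
/- Let f : ℝ → ℝ be a monotone (increasing) function. Then there exist sequences of continuous functions g_n and h_n such that: (1) each g_n and h_n is increasing and g_n(x) ≤ f(x) ≤ h_n(x) for all x; (2) for each fixed x, the sequence g_n(x) is increasing in n and h_n(x) is decreasing in n; (3) g_n(x) → f(x) and h_n(x) → f(x) at every point x where f is continuous. -/
open Filter Topology

namespace MonoApproxAux

/-- Moreau–Yosida lower approximation of `arctan ∘ f`. -/
noncomputable def G (f : ℝ → ℝ) (n : ℕ) (x : ℝ) : ℝ :=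
  ⨅ y : ℝ, (Real.arctan (f y) + ((n : ℝ) + 1) * |x - y|)

lemma G_bdd (f : ℝ → ℝ) (n : ℕ) (x : ℝ) :
    BddBelow (Set.range fun y => Real.arctan (f y) + ((n : ℝ) + 1) * |x - y|) := by
  refine ⟨-(Real.pi / 2), ?_⟩
  rintro _ ⟨y, rfl⟩
  have h1 := Real.neg_pi_div_two_lt_arctan (f y)
  have h2 : (0:ℝ) ≤ ((n : ℝ) + 1) * |x - y| := by positivity
  linarith

lemma G_le (f : ℝ → ℝ) (n : ℕ) (x : ℝ) : G f n x ≤ Real.arctan (f x) := by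
  have := ciInf_le (G_bdd f n x) x
  simpa [G] using this

lemma le_G (f : ℝ → ℝ) (hf : Monotone f) (n : ℕ) (x : ℝ) :
    Real.arctan (f (x - Real.pi)) ≤ G f n x := by
  refine le_ciInf fun y => ?_
  rcases le_or_gt (x - Real.pi) y with hy | hy
  · have h1 : Real.arctan (f (x - Real.pi)) ≤ Real.arctan (f y) :=
      Real.arctan_strictMono.monotone (hf hy)
    have h2 : (0:ℝ) ≤ ((n : ℝ) + 1) * |x - y| := by positivity
    linarith
  · have hpi2 : Real.pi < |x - y| := by
      rw [abs_of_pos (by linarith [Real.pi_pos])]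
      linarith
    have hn1 : (1:ℝ) ≤ (n : ℝ) + 1 := by have := Nat.cast_nonneg (α := ℝ) n; linarith
    have h2 : Real.pi ≤ ((n : ℝ) + 1) * |x - y| := by nlinarith [Real.pi_pos]
    have h1 := Real.neg_pi_div_two_lt_arctan (f y)
    have h3 := Real.arctan_lt_pi_div_two (f (x - Real.pi))
    linarith

lemma G_mem (f : ℝ → ℝ) (hf : Monotone f) (n : ℕ) (x : ℝ) :
    G f n x ∈ Set.Ioo (-(Real.pi / 2)) (Real.pi / 2) :=
  ⟨lt_of_lt_of_le (Real.neg_pi_div_two_lt_arctan _) (le_G f hf n x),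
   lt_of_le_of_lt (G_le f n x) (Real.arctan_lt_pi_div_two _)⟩

lemma G_lip_aux (f : ℝ → ℝ) (n : ℕ) (x x' : ℝ) :
    G f n x ≤ G f n x' + ((n : ℝ) + 1) * |x - x'| := by
  rw [← sub_le_iff_le_add]
  refine le_ciInf fun y => ?_
  have h1 : G f n x ≤ Real.arctan (f y) + ((n : ℝ) + 1) * |x - y| :=
    ciInf_le (G_bdd f n x) y
  have h2 : |x - y| ≤ |x' - y| + |x - x'| := by
    calc |x - y| = |(x - x') + (x' - y)| := by ring_nf
    _ ≤ |x - x'| + |x' - y| := abs_add_le _ _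
    _ = |x' - y| + |x - x'| := by ring
  nlinarith [abs_nonneg (x - x'), abs_nonneg (x' - y)]

lemma G_cont (f : ℝ → ℝ) (n : ℕ) : Continuous (G f n) := by
  have : LipschitzWith (Real.toNNReal ((n : ℝ) + 1)) (G f n) := by
    refine LipschitzWith.of_dist_le_mul fun x x' => ?_
    rw [Real.dist_eq, Real.dist_eq, Real.coe_toNNReal _ (by positivity)]
    rw [abs_sub_le_iff]
    constructor
    · have := G_lip_aux f n x x'; linarith
    · have := G_lip_aux f n x' x
      rw [abs_sub_comm] at this; linarith
  exact this.continuous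

lemma G_mono (f : ℝ → ℝ) (hf : Monotone f) (n : ℕ) : Monotone (G f n) := by
  intro x1 x2 hx
  refine le_ciInf fun y => ?_
  rcases le_or_gt y x1 with hy | hy
  · have h1 : G f n x1 ≤ Real.arctan (f y) + ((n : ℝ) + 1) * |x1 - y| :=
      ciInf_le (G_bdd f n x1) y
    have h2 : |x1 - y| ≤ |x2 - y| := by
      rw [abs_of_nonneg (by linarith), abs_of_nonneg (by linarith)]; linarith
    nlinarith
  · have h1 : G f n x1 ≤ Real.arctan (f x1) := G_le f n x1
    have h2 : Real.arctan (f x1) ≤ Real.arctan (f y) := Real.arctan_strictMono.monotone (hf hy.le)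
    have h3 : (0:ℝ) ≤ ((n : ℝ) + 1) * |x2 - y| := by positivity
    linarith

lemma G_mono_n (f : ℝ → ℝ) (x : ℝ) : Monotone fun n => G f n x := by
  intro m n hmn
  refine le_ciInf fun y => ?_
  have h1 : G f m x ≤ Real.arctan (f y) + ((m : ℝ) + 1) * |x - y| :=
    ciInf_le (G_bdd f m x) y
  have h2 : ((m : ℝ) + 1) * |x - y| ≤ ((n : ℝ) + 1) * |x - y| := by
    have : (m : ℝ) ≤ (n : ℝ) := Nat.cast_le.2 hmn
    nlinarith [abs_nonneg (x - y)]
  linarith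

lemma G_tendsto (f : ℝ → ℝ) (hf : Monotone f) (x : ℝ) (hc : ContinuousAt f x) :
    Tendsto (fun n => G f n x) atTop (𝓝 (Real.arctan (f x))) := by
  have hA : ContinuousAt (fun y => Real.arctan (f y)) x :=
    Real.continuous_arctan.continuousAt.comp hc
  rw [tendsto_order]
  constructor
  · intro a ha
    set ε : ℝ := (Real.arctan (f x) - a) / 2 with hε
    have hεpos : 0 < ε := by simp only [hε]; linarith
    obtain ⟨δ, hδpos, hδ⟩ := Metric.continuousAt_iff.1 hA ε hεpos
    obtain ⟨N, hN⟩ := exists_nat_gt ((a + Real.pi / 2) / δ)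
    refine eventually_atTop.2 ⟨N, fun n hn => ?_⟩
    have hnN : ((a + Real.pi / 2) / δ) < (n : ℝ) + 1 := by
      have : (N : ℝ) ≤ (n : ℝ) := Nat.cast_le.2 hn
      linarith
    have hkey : a + Real.pi / 2 < ((n : ℝ) + 1) * δ := by
      rw [div_lt_iff₀ hδpos] at hnN; linarith
    have hmin : a < min (Real.arctan (f x) - ε) (-(Real.pi / 2) + ((n : ℝ) + 1) * δ) := by
      refine lt_min (by simp only [hε]; linarith) (by linarith)
    refine lt_of_lt_of_le hmin (le_ciInf fun y => ?_)
    rcases lt_or_ge (dist y x) δ with hy | hy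
    · have := hδ hy
      rw [Real.dist_eq] at this
      have h1 : Real.arctan (f x) - ε < Real.arctan (f y) := by
        cases abs_lt.1 this; linarith
      have h2 : (0:ℝ) ≤ ((n : ℝ) + 1) * |x - y| := by positivity
      calc min (Real.arctan (f x) - ε) (-(Real.pi / 2) + ((n : ℝ) + 1) * δ)
          ≤ Real.arctan (f x) - ε := min_le_left _ _
        _ ≤ Real.arctan (f y) + ((n : ℝ) + 1) * |x - y| := by linarith
    · have h1 : δ ≤ |x - y| := by rwa [Real.dist_eq, abs_sub_comm] at hy
      have h2 : ((n : ℝ) + 1) * δ ≤ ((n : ℝ) + 1) * |x - y| := by nlinarith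
      have h3 := Real.neg_pi_div_two_lt_arctan (f y)
      calc min (Real.arctan (f x) - ε) (-(Real.pi / 2) + ((n : ℝ) + 1) * δ)
          ≤ -(Real.pi / 2) + ((n : ℝ) + 1) * δ := min_le_right _ _
        _ ≤ Real.arctan (f y) + ((n : ℝ) + 1) * |x - y| := by linarith
  · intro b hb
    exact Eventually.of_forall fun n => lt_of_le_of_lt (G_le f n x) hb

/-- The lower approximation: `tan ∘ G`. -/
noncomputable def g (f : ℝ → ℝ) (n : ℕ) (x : ℝ) : ℝ := Real.tan (G f n x)

lemma tan_monoOn : MonotoneOn Real.tan (Set.Ioo (-(Real.pi / 2)) (Real.pi / 2)) :=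
  Real.strictMonoOn_tan.monotoneOn

lemma arctan_mem (t : ℝ) :
    Real.arctan t ∈ Set.Ioo (-(Real.pi / 2)) (Real.pi / 2) :=
  ⟨Real.neg_pi_div_two_lt_arctan t, Real.arctan_lt_pi_div_two t⟩

lemma lower (f : ℝ → ℝ) (hf : Monotone f) :
    ∃ g : ℕ → ℝ → ℝ,
      (∀ n, Continuous (g n)) ∧ (∀ n, Monotone (g n)) ∧
      (∀ n x, g n x ≤ f x) ∧ (∀ x, Monotone fun n => g n x) ∧
      (∀ x, ContinuousAt f x → Tendsto (fun n => g n x) atTop (𝓝 (f x))) := by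
  refine ⟨g f, ?_, ?_, ?_, ?_, ?_⟩
  · intro n
    rw [continuous_iff_continuousAt]
    intro x
    have hmem := G_mem f hf n x
    have hcos : Real.cos (G f n x) ≠ 0 :=
      (Real.cos_pos_of_mem_Ioo hmem).ne'
    exact (Real.continuousAt_tan.2 hcos).comp (G_cont f n).continuousAt
  · intro n x1 x2 hx
    exact tan_monoOn (G_mem f hf n x1) (G_mem f hf n x2) (G_mono f hf n hx)
  · intro n x
    have h1 : Real.tan (G f n x) ≤ Real.tan (Real.arctan (f x)) :=
      tan_monoOn (G_mem f hf n x) (arctan_mem (f x)) (G_le f n x)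
    rwa [Real.tan_arctan] at h1
  · intro x m n hmn
    exact tan_monoOn (G_mem f hf m x) (G_mem f hf n x) (G_mono_n f x hmn)
  · intro x hc
    have htan : ContinuousAt Real.tan (Real.arctan (f x)) :=
      Real.continuousAt_tan.2 (Real.cos_pos_of_mem_Ioo (arctan_mem (f x))).ne'
    have := htan.tendsto.comp (G_tendsto f hf x hc)
    simpa [Function.comp_def, g, Real.tan_arctan] using this

end MonoApproxAux

/-- Monotone approximation of an increasing function by continuous increasing
functions from below (`g`) and above (`h`), monotone in `n`, converging at
continuity points. -/
theorem monotone_approx_continuous (f : ℝ → ℝ) (hf : Monotone f) :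
    ∃ g h : ℕ → ℝ → ℝ,
      (∀ n, Continuous (g n) ∧ Continuous (h n)) ∧
      (∀ n, Monotone (g n) ∧ Monotone (h n)) ∧
      (∀ n x, g n x ≤ f x ∧ f x ≤ h n x) ∧
      (∀ x, Monotone fun n => g n x) ∧
      (∀ x, Antitone fun n => h n x) ∧
      (∀ x, ContinuousAt f x →
        Tendsto (fun n => g n x) atTop (𝓝 (f x)) ∧
        Tendsto (fun n => h n x) atTop (𝓝 (f x))) := by
  obtain ⟨g, gc, gm, gle, gmn, gt⟩ := MonoApproxAux.lower f hf
  -- reflected function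
  set F : ℝ → ℝ := fun x => -f (-x) with hF
  have hFmono : Monotone F := fun a b hab => by
    simp only [hF]
    have := hf (neg_le_neg hab)
    linarith
  obtain ⟨G, Gc, Gm, Gle, Gmn, Gt⟩ := MonoApproxAux.lower F hFmono
  refine ⟨g, fun n x => -G n (-x), ?_, ?_, ?_, gmn, ?_, ?_⟩
  · exact fun n => ⟨gc n, ((Gc n).comp continuous_neg).neg⟩
  · refine fun n => ⟨gm n, fun a b hab => ?_⟩
    have := Gm n (neg_le_neg hab)
    simpa using this
  · refine fun n x => ⟨gle n x, ?_⟩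
    have := Gle n (-x)
    simp only [hF, neg_neg] at this
    simp only []
    linarith
  · intro x m n hmn
    simp only
    have := Gmn (-x) hmn
    simpa using this
  · intro x hc
    refine ⟨gt x hc, ?_⟩
    have hFc : ContinuousAt F (-x) := by
      have h1 : ContinuousAt (fun y : ℝ => f (-y)) (-x) := by
        have : ContinuousAt f (-(-x)) := by rwa [neg_neg]
        exact this.comp continuous_neg.continuousAt
      exact h1.neg
    have := (Gt (-x) hFc).neg
    simp only [hF, neg_neg] at this
    exact this
end

section
/- Let Ω ⊆ ℝ² be a bounded convex open set with finitely many flat boundary parts. Then there exists a sequence of strictly convex bounded open sets Ω_n ⊇ Ω such that the closures of Ω_n converge to the closure of Ω in the Hausdorff metric. -/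
open Filter Topology Metric Set RealInnerProductSpace

noncomputable section

abbrev Plane := EuclideanSpace ℝ (Fin 2)

/-- `FlatPart Ω p q` : the segment `[p,q]` is a flat part of `∂Ω`, i.e. a
maximal nondegenerate line segment contained in `∂Ω`. -/
def FlatPart (Ω : Set Plane) (p q : Plane) : Prop :=
  p ≠ q ∧ segment ℝ p q ⊆ frontier Ω ∧
  ∀ p' q' : Plane, segment ℝ p q ⊆ segment ℝ p' q' →
    segment ℝ p' q' ⊆ frontier Ω → segment ℝ p' q' = segment ℝ p q

/-- Any point outside a closed bounded convex set can be separated from it by a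
closed ball containing the set. -/
lemma ball_sep (K : Set Plane) (hKc : IsClosed K) (hKb : Bornology.IsBounded K)
    (hKconv : Convex ℝ K) (hne : K.Nonempty) {x : Plane} (hx : x ∉ K) :
    ∃ c r, K ⊆ closedBall c r ∧ x ∉ closedBall c r := by
  obtain ⟨f, u, hfu, hux⟩ := geometric_hahn_banach_closed_point hKconv hKc hx
  obtain ⟨p, hp⟩ := hne
  set v : Plane := (InnerProductSpace.toDual ℝ Plane).symm f with hv
  have hvf : ∀ y : Plane, (inner ℝ (v) (y) : ℝ) = f y := fun y => InnerProductSpace.toDual_symm_apply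
  have hvne : v ≠ 0 := by
    intro h
    have h1 : f p = 0 := by rw [← hvf, h, inner_zero_left]
    have h2 : f x = 0 := by rw [← hvf, h, inner_zero_left]
    have := hfu p hp
    linarith [hux, h1.symm ▸ this, h2 ▸ hux]
  have hvpos : (0:ℝ) < ‖v‖ := norm_pos_iff.mpr hvne
  obtain ⟨D₀, hD₀⟩ := hKb.subset_closedBall p
  set D : ℝ := max D₀ 0 with hD
  have hDnn : 0 ≤ D := le_max_right _ _
  have hDK : K ⊆ closedBall p D := hD₀.trans (closedBall_subset_closedBall (le_max_left _ _))
  set δ : ℝ := f x - u with hδdef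
  have hδ : 0 < δ := sub_pos.mpr hux
  set a : ℝ := u - f p with hadef
  have ha : 0 < a := sub_pos.mpr (hfu p hp)
  set R : ℝ := D ^ 2 / (2 * δ) with hR
  have hRnn : 0 ≤ R := div_nonneg (sq_nonneg _) (by linarith)
  set c : Plane := p - R • v with hc
  set r : ℝ := Real.sqrt (D ^ 2 + 2 * R * a + R ^ 2 * ‖v‖ ^ 2) with hr
  have hrsq : D ^ 2 + 2 * R * a + R ^ 2 * ‖v‖ ^ 2 = r ^ 2 := by
    rw [hr, Real.sq_sqrt]
    positivity
  refine ⟨c, r, ?_, ?_⟩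
  · intro y hy
    have hyD : ‖y - p‖ ≤ D := by
      have := hDK hy
      rwa [mem_closedBall, dist_eq_norm] at this
    have hinner : (inner ℝ (y - p) (R • v) : ℝ) ≤ R * a := by
      rw [real_inner_smul_right]
      have h1 : (inner ℝ (y - p) (v) : ℝ) = f y - f p := by
        rw [real_inner_comm, inner_sub_right, hvf, hvf]
      rw [h1]
      have : f y - f p ≤ a := by
        have := hfu y hy
        simp only [hadef]; linarith
      exact mul_le_mul_of_nonneg_left this hRnn
    have key : ‖y - c‖ ^ 2 ≤ r ^ 2 := by
      have hyc : y - c = (y - p) + R • v := by rw [hc]; abel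
      rw [hyc, norm_add_sq_real, norm_smul, Real.norm_eq_abs, abs_of_nonneg hRnn,
        mul_pow, ← hrsq]
      have h2 : ‖y - p‖ ^ 2 ≤ D ^ 2 := by
        apply sq_le_sq' _ hyD; linarith [norm_nonneg (y - p)]
      nlinarith
    rw [mem_closedBall, dist_eq_norm]
    have hrnn : 0 ≤ r := Real.sqrt_nonneg _
    nlinarith [norm_nonneg (y - c)]
  · rw [mem_closedBall, dist_eq_norm, not_le]
    set b : ℝ := f x - f p with hb
    have hbval : b = δ + a := by rw [hb, hδdef, hadef]; ring
    have hbpos : 0 < b := by rw [hbval]; linarith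
    have hCS : b ≤ ‖v‖ * ‖x - p‖ := by
      have h1 : (inner ℝ (v) (x - p) : ℝ) = b := by
        rw [inner_sub_right, hvf, hvf]
      calc b = (inner ℝ (v) (x - p) : ℝ) := h1.symm
        _ ≤ ‖v‖ * ‖x - p‖ := real_inner_le_norm _ _
    have hxp2 : (b / ‖v‖) ^ 2 ≤ ‖x - p‖ ^ 2 := by
      rw [div_pow]
      rw [div_le_iff₀ (by positivity)]
      nlinarith [norm_nonneg (x - p)]
    have hinner : (inner ℝ (x - p) (R • v) : ℝ) = R * b := by
      rw [real_inner_smul_right]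
      congr 1
      rw [real_inner_comm, inner_sub_right, hvf, hvf]
    have key : r ^ 2 < ‖x - c‖ ^ 2 := by
      have hxc : x - c = (x - p) + R • v := by rw [hc]; abel
      clear_value D δ a R r b
      rw [hxc, norm_add_sq_real, hinner, norm_smul, Real.norm_eq_abs,
        abs_of_nonneg hRnn, mul_pow, ← hrsq]
      have h2Rδ : 2 * R * δ = D ^ 2 := by
        have hδne : δ ≠ 0 := ne_of_gt hδ
        rw [hR]
        field_simp
      have hRb : R * b = R * δ + R * a := by rw [hbval]; ring
      have hbq : 0 < (b / ‖v‖) ^ 2 := by positivity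
      linarith [hbq, hxp2, h2Rδ, hRb]
    exact lt_of_pow_lt_pow_left₀ 2 (norm_nonneg _) key

lemma strictConvex_biInter {ι : Type*} (t : Finset ι) (B : ι → Set Plane)
    (hB : ∀ i, StrictConvex ℝ (B i)) : StrictConvex ℝ (⋂ i ∈ t, B i) := by
  classical
  induction t using Finset.induction_on with
  | empty => simpa using strictConvex_univ
  | insert _ _ h ih =>
    rw [Finset.set_biInter_insert]
    exact (hB _).inter ih

/-- One approximation step: a strictly convex compact neighbourhood within `ε`. -/
lemma approx_step (K : Set Plane) (hKc : IsClosed K) (hKb : Bornology.IsBounded K)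
    (hKconv : Convex ℝ K) (hne : K.Nonempty) {ε : ℝ} (hε : 0 < ε) :
    ∃ C : Set Plane, IsClosed C ∧ Bornology.IsBounded C ∧ StrictConvex ℝ C ∧
      K ⊆ C ∧ ∀ y ∈ C, infDist y K ≤ ε := by
  classical
  obtain ⟨p, hp⟩ := hne
  obtain ⟨R₀', hR₀'⟩ := hKb.subset_closedBall p
  set R₀ : ℝ := max R₀' 0 with hR₀def
  have hR₀ : K ⊆ closedBall p R₀ :=
    hR₀'.trans (closedBall_subset_closedBall (le_max_left _ _))
  set S : Set Plane := {x | infDist x K = ε} with hS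
  have hSclosed : IsClosed S := isClosed_eq (continuous_infDist_pt K) continuous_const
  have hSbdd : Bornology.IsBounded S := by
    apply (Metric.isBounded_closedBall (x := p) (r := R₀ + ε + 1)).subset
    intro x hxS
    have hxε : infDist x K < ε + 1 := by rw [hxS]; linarith
    obtain ⟨z, hzK, hz⟩ := (infDist_lt_iff ⟨p, hp⟩).mp hxε
    have hzp : dist z p ≤ R₀ := by
      have := hR₀ hzK; rwa [mem_closedBall] at this
    have : dist x p ≤ dist x z + dist z p := dist_triangle _ _ _
    rw [mem_closedBall]
    linarith
  have hScompact : IsCompact S := Metric.isCompact_of_isClosed_isBounded hSclosed hSbdd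
  have hSnotK : ∀ x : S, (x : Plane) ∉ K := by
    rintro ⟨x, hxS⟩ hxK
    have : infDist x K = 0 := infDist_zero_of_mem hxK
    rw [hS] at hxS
    simp only [mem_setOf_eq] at hxS
    rw [this] at hxS
    exact absurd hxS.symm (ne_of_gt hε)
  have hsep : ∀ x : S, ∃ c r, K ⊆ closedBall c r ∧ (x : Plane) ∉ closedBall c r :=
    fun x => ball_sep K hKc hKb hKconv ⟨p, hp⟩ (hSnotK x)
  choose c r hKB hxB using hsep
  have hcover : S ⊆ ⋃ i : S, (closedBall (c i) (r i))ᶜ := by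
    intro x hxS
    exact mem_iUnion.mpr ⟨⟨x, hxS⟩, hxB ⟨x, hxS⟩⟩
  obtain ⟨t, ht⟩ := hScompact.elim_finite_subcover (fun i : S => (closedBall (c i) (r i))ᶜ)
    (fun i => Metric.isClosed_closedBall.isOpen_compl) hcover
  set C : Set Plane := closedBall p R₀ ∩ ⋂ i ∈ t, closedBall (c i) (r i) with hC
  have hCclosed : IsClosed C :=
    Metric.isClosed_closedBall.inter (isClosed_biInter fun i _ => Metric.isClosed_closedBall)
  have hCbdd : Bornology.IsBounded C :=
    Metric.isBounded_closedBall.subset (inter_subset_left)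
  have hCstrict : StrictConvex ℝ C :=
    (strictConvex_closedBall ℝ p R₀).inter
      (strictConvex_biInter t _ fun i => strictConvex_closedBall ℝ _ _)
  have hCconv : Convex ℝ C := hCstrict.convex
  have hKC : K ⊆ C := by
    intro y hy
    exact ⟨hR₀ hy, mem_biInter fun i _ => hKB i hy⟩
  have hCS : Disjoint C S := by
    rw [Set.disjoint_right]
    intro x hxS hxC
    obtain ⟨i, hit, hxi⟩ := mem_iUnion₂.mp (ht hxS)
    exact hxi (mem_iInter₂.mp hxC.2 i hit)
  refine ⟨C, hCclosed, hCbdd, hCstrict, hKC, ?_⟩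
  intro y hyC
  by_contra hcon
  push_neg at hcon
  set g : ℝ → ℝ := fun s => infDist ((1 - s) • p + s • y) K with hg
  have hgc : Continuous g := by
    apply (continuous_infDist_pt K).comp
    fun_prop
  have hg0 : g 0 = 0 := by
    simp only [hg, sub_zero, one_smul, zero_smul, add_zero]
    exact infDist_zero_of_mem hp
  have hg1 : g 1 = infDist y K := by simp [hg]
  have hmem : ε ∈ Icc (g 0) (g 1) := by
    rw [hg0, hg1]
    exact ⟨hε.le, hcon.le⟩
  obtain ⟨s, hs01, hgs⟩ := intermediate_value_Icc zero_le_one hgc.continuousOn hmem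
  set z : Plane := (1 - s) • p + s • y with hz
  have hzC : z ∈ C := by
    have : z ∈ segment ℝ p y := ⟨1 - s, s, by linarith [hs01.1, hs01.2],
      hs01.1, by ring, rfl⟩
    exact hCconv.segment_subset (hKC hp) hyC this
  have hzS : z ∈ S := hgs
  exact (Set.disjoint_left.mp hCS hzC) hzS

/-- The closure of the interior of a closed convex set with nonempty interior
is the set itself. -/
lemma closure_interior_convex {C : Set Plane} (hC : Convex ℝ C) (hcl : IsClosed C)
    {y : Plane} (hy : y ∈ interior C) : closure (interior C) = C := by
  apply Subset.antisymm (closure_minimal interior_subset hcl)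
  intro x hx
  have hseq : ∀ n : ℕ, x + (1 / (n + 1) : ℝ) • (y - x) ∈ interior C := by
    intro n
    apply hC.add_smul_sub_mem_interior hx hy
    constructor
    · positivity
    · rw [div_le_one (by positivity)]
      linarith [Nat.cast_nonneg (α := ℝ) n]
  have h1 : Tendsto (fun n : ℕ => (1 / (n + 1) : ℝ)) atTop (𝓝 0) :=
    tendsto_one_div_add_atTop_nhds_zero_nat
  have h2 : Tendsto (fun n : ℕ => (1 / (n + 1) : ℝ) • (y - x)) atTop (𝓝 ((0:ℝ) • (y - x))) :=
    h1.smul_const (y - x)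
  rw [zero_smul] at h2
  have h3 : Tendsto (fun n : ℕ => x + (1 / (n + 1) : ℝ) • (y - x)) atTop (𝓝 x) := by
    have := (tendsto_const_nhds (x := x) (f := atTop (α := ℕ))).add h2
    simpa using this
  exact mem_closure_of_tendsto h3 (Eventually.of_forall hseq)

/-- A bounded convex open planar set with finitely many flat boundary parts can
be approximated from outside, in the Hausdorff metric, by strictly convex
bounded open sets. -/
theorem approx_by_strictly_convex
    (Ω : Set Plane) (hΩo : IsOpen Ω) (hΩb : Bornology.IsBounded Ω)
    (hΩc : Convex ℝ Ω) (hΩne : Ω.Nonempty)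
    (hfin : {s : Set Plane | ∃ p q, FlatPart Ω p q ∧ s = segment ℝ p q}.Finite) :
    ∃ Ω' : ℕ → Set Plane,
      (∀ n, IsOpen (Ω' n) ∧ Bornology.IsBounded (Ω' n) ∧
        StrictConvex ℝ (closure (Ω' n)) ∧ Ω ⊆ Ω' n) ∧
      Tendsto (fun n => hausdorffDist (closure (Ω' n)) (closure Ω))
        atTop (𝓝 0) := by
  classical
  set K : Set Plane := closure Ω with hK
  have hKc : IsClosed K := isClosed_closure
  have hKb : Bornology.IsBounded K := hΩb.closure
  have hKconv : Convex ℝ K := hΩc.closure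
  have hKne : K.Nonempty := hΩne.closure
  have hKcompact : IsCompact K := Metric.isCompact_of_isClosed_isBounded hKc hKb
  have hstep : ∀ n : ℕ, ∃ C : Set Plane, IsClosed C ∧ Bornology.IsBounded C ∧
      StrictConvex ℝ C ∧ K ⊆ C ∧ ∀ y ∈ C, infDist y K ≤ 1 / (n + 1) :=
    fun n => approx_step K hKc hKb hKconv hKne (by positivity)
  choose C hCclosed hCbdd hCstrict hKC hCnear using hstep
  refine ⟨fun n => interior (C n), ?_, ?_⟩
  · intro n
    have hΩC : Ω ⊆ interior (C n) :=
      interior_maximal ((subset_closure).trans (hKC n)) hΩo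
    obtain ⟨y₀, hy₀⟩ := hΩne
    have hclosureeq : closure (interior (C n)) = C n :=
      closure_interior_convex (hCstrict n).convex (hCclosed n) (hΩC hy₀)
    exact ⟨isOpen_interior, (hCbdd n).subset interior_subset,
      hclosureeq ▸ hCstrict n, hΩC⟩
  · have hbound : ∀ n : ℕ,
        hausdorffDist (closure (interior (C n))) (closure Ω) ≤ 1 / (n + 1) := by
      intro n
      obtain ⟨y₀, hy₀⟩ := hΩne
      have hΩC : Ω ⊆ interior (C n) :=
        interior_maximal ((subset_closure).trans (hKC n)) hΩo
      have hclosureeq : closure (interior (C n)) = C n :=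
        closure_interior_convex (hCstrict n).convex (hCclosed n) (hΩC hy₀)
      rw [hclosureeq, ← hK]
      apply hausdorffDist_le_of_mem_dist (by positivity)
      · intro x hxC
        obtain ⟨z, hzK, hz⟩ := hKcompact.exists_infDist_eq_dist hKne x
        exact ⟨z, hzK, hz ▸ hCnear n x hxC⟩
      · intro z hzK
        exact ⟨z, hKC n hzK, by simp; positivity⟩
    apply squeeze_zero (fun n => hausdorffDist_nonneg) hbound
    exact tendsto_one_div_add_atTop_nhds_zero_nat
end
end
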